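/- Consider the 9-dimensional Lie algebra L_{9,61} = sl(2,R) ⋉_{2D_1} 6L_1 with nonzero brackets [X_1,X_2]=2X_2, [X_1,X_3]=−2X_3, [X_2,X_3]=X_1, [X_1,X_4]=2X_4, [X_1,X_6]=−2X_6, [X_1,X_7]=2X_7, [X_1,X_9]=−2X_9, [X_2,X_5]=2X_4, [X_2,X_6]=X_5, [X_2,X_8]=2X_7, [X_2,X_9]=X_8, [X_3,X_4]=X_5, [X_3,X_5]=2X_6, [X_3,X_7]=X_8, [X_3,X_8]=2X_9. Then the functions J_1 = x_4 x_6 − (1/4)x_5², J_2 = x_7 x_9 − (1/4)x_8², I_3 = 2 x_4 x_9 − x_5 x_8 + 2 x_6 x_7 satisfy \hat{X}_i(J_1) = \hat{X}_i(J_2) = \hat{X}_i(I_3) = 0 for all i = 1,...,9. -/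

import Mathlib

open Finset

noncomputable def Xhat (C : Fin 9 → Fin 9 → Fin 9 → ℝ) (i : Fin 9)
    (F : (Fin 9 → ℝ) → ℝ) : (Fin 9 → ℝ) → ℝ :=
  fun x => ∑ j : Fin 9, (∑ k : Fin 9, C i j k * x k) * fderiv ℝ F x (Pi.single j 1)

noncomputable def Lhalf : Fin 9 → Fin 9 → Fin 9 → ℝ := fun i j k =>
  if (i, j, k) = ((0 : Fin 9), (1 : Fin 9), (1 : Fin 9)) then (2 : ℝ) else
  if (i, j, k) = ((0 : Fin 9), (2 : Fin 9), (2 : Fin 9)) then (-2 : ℝ) else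
  if (i, j, k) = ((1 : Fin 9), (2 : Fin 9), (0 : Fin 9)) then (1 : ℝ) else
  if (i, j, k) = ((0 : Fin 9), (3 : Fin 9), (3 : Fin 9)) then (2 : ℝ) else
  if (i, j, k) = ((0 : Fin 9), (5 : Fin 9), (5 : Fin 9)) then (-2 : ℝ) else
  if (i, j, k) = ((0 : Fin 9), (6 : Fin 9), (6 : Fin 9)) then (2 : ℝ) else
  if (i, j, k) = ((0 : Fin 9), (8 : Fin 9), (8 : Fin 9)) then (-2 : ℝ) else
  if (i, j, k) = ((1 : Fin 9), (4 : Fin 9), (3 : Fin 9)) then (2 : ℝ) else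
  if (i, j, k) = ((1 : Fin 9), (5 : Fin 9), (4 : Fin 9)) then (1 : ℝ) else
  if (i, j, k) = ((1 : Fin 9), (7 : Fin 9), (6 : Fin 9)) then (2 : ℝ) else
  if (i, j, k) = ((1 : Fin 9), (8 : Fin 9), (7 : Fin 9)) then (1 : ℝ) else
  if (i, j, k) = ((2 : Fin 9), (3 : Fin 9), (4 : Fin 9)) then (1 : ℝ) else
  if (i, j, k) = ((2 : Fin 9), (4 : Fin 9), (5 : Fin 9)) then (2 : ℝ) else
  if (i, j, k) = ((2 : Fin 9), (6 : Fin 9), (7 : Fin 9)) then (1 : ℝ) else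
  if (i, j, k) = ((2 : Fin 9), (7 : Fin 9), (8 : Fin 9)) then (2 : ℝ) else
  0

noncomputable def C (i j k : Fin 9) : ℝ := Lhalf i j k - Lhalf j i k

noncomputable def J₁ : (Fin 9 → ℝ) → ℝ := fun x => x 3 * x 5 - (1/4) * (x 4)^2
noncomputable def J₂ : (Fin 9 → ℝ) → ℝ := fun x => x 6 * x 8 - (1/4) * (x 7)^2
noncomputable def I₃ : (Fin 9 → ℝ) → ℝ := fun x => 2 * x 3 * x 8 - x 4 * x 7 + 2 * x 5 * x 6


open ContinuousLinearMap in
lemma hJ1 (x : Fin 9 → ℝ) : HasFDerivAt J₁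
    (x 5 • (proj 3 : (Fin 9 → ℝ) →L[ℝ] ℝ) + x 3 • (proj 5 : (Fin 9 → ℝ) →L[ℝ] ℝ)
      - ((1/2) * x 4) • (proj 4 : (Fin 9 → ℝ) →L[ℝ] ℝ)) x := by
  have h3 : HasFDerivAt (fun x : Fin 9 → ℝ => x 3) (proj 3 : (Fin 9 → ℝ) →L[ℝ] ℝ) x := hasFDerivAt_apply (𝕜 := ℝ) 3 x
  have h4 : HasFDerivAt (fun x : Fin 9 → ℝ => x 4) (proj 4 : (Fin 9 → ℝ) →L[ℝ] ℝ) x := hasFDerivAt_apply (𝕜 := ℝ) 4 x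
  have h5 : HasFDerivAt (fun x : Fin 9 → ℝ => x 5) (proj 5 : (Fin 9 → ℝ) →L[ℝ] ℝ) x := hasFDerivAt_apply (𝕜 := ℝ) 5 x
  have h := (h3.mul h5).sub ((h4.mul h4).const_mul (1/4 : ℝ))
  have e : J₁ = fun x : Fin 9 → ℝ => x 3 * x 5 - (1/4) * (x 4 * x 4) := by
    funext y; simp [J₁]; ring
  rw [e]
  refine h.congr_fderiv ?_
  ext v
  simp
  ring

open ContinuousLinearMap in
lemma hJ2 (x : Fin 9 → ℝ) : HasFDerivAt J₂
    (x 8 • (proj 6 : (Fin 9 → ℝ) →L[ℝ] ℝ) + x 6 • (proj 8 : (Fin 9 → ℝ) →L[ℝ] ℝ)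
      - ((1/2) * x 7) • (proj 7 : (Fin 9 → ℝ) →L[ℝ] ℝ)) x := by
  have h6 : HasFDerivAt (fun x : Fin 9 → ℝ => x 6) (proj 6 : (Fin 9 → ℝ) →L[ℝ] ℝ) x := hasFDerivAt_apply (𝕜 := ℝ) 6 x
  have h7 : HasFDerivAt (fun x : Fin 9 → ℝ => x 7) (proj 7 : (Fin 9 → ℝ) →L[ℝ] ℝ) x := hasFDerivAt_apply (𝕜 := ℝ) 7 x
  have h8 : HasFDerivAt (fun x : Fin 9 → ℝ => x 8) (proj 8 : (Fin 9 → ℝ) →L[ℝ] ℝ) x := hasFDerivAt_apply (𝕜 := ℝ) 8 x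
  have h := (h6.mul h8).sub ((h7.mul h7).const_mul (1/4 : ℝ))
  have e : J₂ = fun x : Fin 9 → ℝ => x 6 * x 8 - (1/4) * (x 7 * x 7) := by
    funext y; simp [J₂]; ring
  rw [e]
  refine h.congr_fderiv ?_
  ext v
  simp
  ring

open ContinuousLinearMap in
lemma hI3 (x : Fin 9 → ℝ) : HasFDerivAt I₃
    ((2 * x 8) • (proj 3 : (Fin 9 → ℝ) →L[ℝ] ℝ) + (2 * x 3) • (proj 8 : (Fin 9 → ℝ) →L[ℝ] ℝ)
      - (x 7) • (proj 4 : (Fin 9 → ℝ) →L[ℝ] ℝ) - (x 4) • (proj 7 : (Fin 9 → ℝ) →L[ℝ] ℝ)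
      + (2 * x 6) • (proj 5 : (Fin 9 → ℝ) →L[ℝ] ℝ) + (2 * x 5) • (proj 6 : (Fin 9 → ℝ) →L[ℝ] ℝ)) x := by
  have h3 : HasFDerivAt (fun x : Fin 9 → ℝ => x 3) (proj 3 : (Fin 9 → ℝ) →L[ℝ] ℝ) x := hasFDerivAt_apply (𝕜 := ℝ) 3 x
  have h4 : HasFDerivAt (fun x : Fin 9 → ℝ => x 4) (proj 4 : (Fin 9 → ℝ) →L[ℝ] ℝ) x := hasFDerivAt_apply (𝕜 := ℝ) 4 x
  have h5 : HasFDerivAt (fun x : Fin 9 → ℝ => x 5) (proj 5 : (Fin 9 → ℝ) →L[ℝ] ℝ) x := hasFDerivAt_apply (𝕜 := ℝ) 5 x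
  have h6 : HasFDerivAt (fun x : Fin 9 → ℝ => x 6) (proj 6 : (Fin 9 → ℝ) →L[ℝ] ℝ) x := hasFDerivAt_apply (𝕜 := ℝ) 6 x
  have h7 : HasFDerivAt (fun x : Fin 9 → ℝ => x 7) (proj 7 : (Fin 9 → ℝ) →L[ℝ] ℝ) x := hasFDerivAt_apply (𝕜 := ℝ) 7 x
  have h8 : HasFDerivAt (fun x : Fin 9 → ℝ => x 8) (proj 8 : (Fin 9 → ℝ) →L[ℝ] ℝ) x := hasFDerivAt_apply (𝕜 := ℝ) 8 x
  have := (((h3.mul h8).const_mul (2:ℝ)).sub (h4.mul h7)).add ((h5.mul h6).const_mul (2:ℝ))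
  have e : I₃ = fun x : Fin 9 → ℝ => 2 * (x 3 * x 8) - x 4 * x 7 + 2 * (x 5 * x 6) := by
    funext y; simp [I₃]; ring
  rw [e]
  refine this.congr_fderiv ?_
  ext v
  simp
  ring

lemma fdJ1 (x v : Fin 9 → ℝ) :
    fderiv ℝ J₁ x v = x 5 * v 3 + x 3 * v 5 - (1/2) * x 4 * v 4 := by
  rw [(hJ1 x).fderiv]; simp

lemma fdJ2 (x v : Fin 9 → ℝ) :
    fderiv ℝ J₂ x v = x 8 * v 6 + x 6 * v 8 - (1/2) * x 7 * v 7 := by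
  rw [(hJ2 x).fderiv]; simp

lemma fdI3 (x v : Fin 9 → ℝ) :
    fderiv ℝ I₃ x v = 2 * x 8 * v 3 + 2 * x 3 * v 8 - x 7 * v 4 - x 4 * v 7
      + 2 * x 6 * v 5 + 2 * x 5 * v 6 := by
  rw [(hI3 x).fderiv]; simp


lemma sum9 (f : Fin 9 → ℝ) : ∑ i, f i =
    f 0 + f 1 + f 2 + f 3 + f 4 + f 5 + f 6 + f 7 + f 8 := by
  rw [Fin.sum_univ_castSucc, Fin.sum_univ_eight]
  rfl

set_option maxHeartbeats 4000000 in
theorem invariants_L9_61 :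
    ∀ (i : Fin 9) (x : Fin 9 → ℝ),
      Xhat C i J₁ x = 0 ∧ Xhat C i J₂ x = 0 ∧ Xhat C i I₃ x = 0 := by
  intro i x
  fin_cases i <;>
  refine ⟨?_, ?_, ?_⟩ <;>
  · simp only [Xhat, fdJ1, fdJ2, fdI3, sum9]
    simp (config := { decide := true }) only [C, Lhalf, Pi.single_apply]
    norm_num <;> ring_nf
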